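/- Let k ≥ 2, let w ∈ {right, down}^{k−1} be the step word of a stair Γ with k boxes, and let v : {0,…,k−1} → ℤ be its favorite condition. Then: (a) Σ_{i=0}^{k−1} v(i) = 0, i.e. the favorite condition is a stability condition; and (b) for every submodule substair S with ∅ ≠ S ≠ {0,…,k−1}, Σ_{i∈S} v(i) > 0. (This is the Remark that every toric G-constellation 𝓕 is stable with respect to its own favorite condition θ_𝓕.) -/

import Mathlib

/-- A step of a stair: a right step `+(1,0)` or a down step `+(0,-1)`. -/
inductive Step
  | right
  | down
deriving DecidableEq, BEq

/-- Box `i` of a stair with `k` boxes and step word `w` is a generator. -/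
def IsGenBox (k : ℕ) (w : ℕ → Step) (i : ℕ) : Prop :=
  (i = 0 ∨ w (i - 1) = Step.down) ∧ (i = k - 1 ∨ w i = Step.right)

/-- Box `i` of a stair with `k` boxes and step word `w` is an antigenerator. -/
def IsAntigenBox (k : ℕ) (w : ℕ → Step) (i : ℕ) : Prop :=
  (i = 0 ∨ w (i - 1) = Step.right) ∧ (i = k - 1 ∨ w i = Step.down)

instance (k : ℕ) (w : ℕ → Step) : DecidablePred (IsGenBox k w) := fun i => by
  unfold IsGenBox; infer_instance

instance (k : ℕ) (w : ℕ → Step) : DecidablePred (IsAntigenBox k w) := fun i => by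
  unfold IsAntigenBox; infer_instance

/-- The favorite condition of the stair with `k` boxes and step word `w`:
`-2` on interior generators, `-1` on extremal generators, `+2` on interior antigenerators,
`+1` on extremal antigenerators and `0` elsewhere. -/
def fav (k : ℕ) (w : ℕ → Step) (i : ℕ) : ℤ :=
  if IsGenBox k w i then (if i = 0 ∨ i = k - 1 then -1 else -2)
  else if IsAntigenBox k w i then (if i = 0 ∨ i = k - 1 then 1 else 2)
  else 0

/-- A subset `S` of the boxes `{0, …, k-1}` is a submodule substair: it is closed under
right steps forwards and under down steps backwards; these are exactly the subsets spanning
a `G`-equivariant `ℂ[x,y]`-submodule of the associated toric `G`-constellation. -/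
def IsSubmoduleSubstair (k : ℕ) (w : ℕ → Step) (S : Finset ℕ) : Prop :=
  S ⊆ Finset.range k ∧
  ∀ i : ℕ, i < k - 1 →
    (i ∈ S → w i = Step.right → i + 1 ∈ S) ∧
    (i + 1 ∈ S → w i = Step.down → i ∈ S)

/-- Boundary weight between box `j-1` and box `j`. -/
def sfun (k : ℕ) (w : ℕ → Step) (j : ℕ) : ℤ :=
  if j = 0 ∨ k ≤ j then 0 else if w (j - 1) = Step.right then -1 else 1

lemma sfun_zero (k : ℕ) (w : ℕ → Step) : sfun k w 0 = 0 := by simp [sfun]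

lemma sfun_hi (k : ℕ) (w : ℕ → Step) (j : ℕ) (h : k ≤ j) : sfun k w j = 0 := by
  simp [sfun, h]

lemma sfun_of_right (k : ℕ) (w : ℕ → Step) (j : ℕ) (h0 : j ≠ 0) (hj : j < k)
    (hw : w (j - 1) = Step.right) : sfun k w j = -1 := by
  simp [sfun, h0, Nat.not_le.mpr hj, hw]

lemma sfun_of_down (k : ℕ) (w : ℕ → Step) (j : ℕ) (h0 : j ≠ 0) (hj : j < k)
    (hw : w (j - 1) = Step.down) : sfun k w j = 1 := by
  simp [sfun, h0, Nat.not_le.mpr hj, hw]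

lemma fav_eq_sfun (k : ℕ) (hk : 2 ≤ k) (w : ℕ → Step) (i : ℕ) (hi : i < k) :
    fav k w i = sfun k w (i + 1) - sfun k w i := by
  by_cases hi0 : i = 0
  · subst hi0
    cases hw : w 0 <;>
      simp [fav, IsGenBox, IsAntigenBox, sfun, hw, (by omega : ¬ (0:ℕ) = k - 1)] <;>
      (try split_ifs) <;> omega
  · by_cases hik : i = k - 1
    · subst hik
      cases hw : w (k - 1 - 1) <;>
        simp [fav, IsGenBox, IsAntigenBox, sfun, hw, hi0] <;>
        (try split_ifs) <;> omega
    · cases hw1 : w (i - 1) <;> cases hw2 : w i <;>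
        simp [fav, IsGenBox, IsAntigenBox, sfun, hw1, hw2, hi0, hik] <;>
        (try split_ifs) <;> omega

/-- For `k ≥ 2` and a stair with `k` boxes and step word `w` with favorite
condition `v`:  (a) `Σ v(i) = 0`, so the favorite condition is a stability condition, and
(b) for every proper nonempty submodule substair `S`, `Σ_{i ∈ S} v(i) > 0`.
(Every toric `G`-constellation is stable for its own favorite condition.) -/
theorem stmt11 (k : ℕ) (hk : 2 ≤ k) (w : ℕ → Step) :
    (∑ i ∈ Finset.range k, fav k w i = 0) ∧
    (∀ S : Finset ℕ, IsSubmoduleSubstair k w S → S.Nonempty → S ≠ Finset.range k →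
      0 < ∑ i ∈ S, fav k w i) := by
  constructor
  · rw [Finset.sum_congr rfl fun i hi => fav_eq_sfun k hk w i (Finset.mem_range.mp hi)]
    rw [Finset.sum_range_sub]
    rw [sfun_zero, sfun_hi k w k le_rfl, sub_self]
  · intro S hS hSne hSprop
    obtain ⟨hSsub, hstep⟩ := hS
    have hmem : ∀ i ∈ S, i < k := fun i hi => Finset.mem_range.mp (hSsub hi)
    have hsum : ∑ i ∈ S, fav k w i
        = ∑ i ∈ S, (sfun k w (i + 1) - sfun k w i) :=
      Finset.sum_congr rfl fun i hi => fav_eq_sfun k hk w i (hmem i hi)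
    rw [hsum, Finset.sum_sub_distrib]
    set T := S.image (· + 1) with hT
    have himg : ∑ i ∈ S, sfun k w (i + 1) = ∑ j ∈ T, sfun k w j := by
      rw [hT, Finset.sum_image]
      intro x _ y _ h; simp only at h; omega
    rw [himg]
    have hTsplit : ∑ j ∈ T \ S, sfun k w j + ∑ j ∈ T ∩ S, sfun k w j
        = ∑ j ∈ T, sfun k w j := by
      rw [← Finset.sdiff_inter_self_left T S]
      exact Finset.sum_sdiff Finset.inter_subset_left
    have hSsplit : ∑ j ∈ S \ T, sfun k w j + ∑ j ∈ S ∩ T, sfun k w j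
        = ∑ j ∈ S, sfun k w j := by
      rw [← Finset.sdiff_inter_self_left S T]
      exact Finset.sum_sdiff Finset.inter_subset_left
    have hinter : ∑ j ∈ T ∩ S, sfun k w j = ∑ j ∈ S ∩ T, sfun k w j := by
      rw [Finset.inter_comm]
    have hTS : ∀ j ∈ T \ S, 0 ≤ sfun k w j := by
      intro j hj
      obtain ⟨hjT, hjS⟩ := Finset.mem_sdiff.mp hj
      obtain ⟨b, hbS, hbj⟩ := Finset.mem_image.mp hjT
      -- hbj : b + 1 = j
      have hbk : b < k := hmem b hbS
      by_cases hjk : k ≤ j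
      · rw [sfun_hi k w j hjk]
      · have hj0 : j ≠ 0 := by omega
        have hwb : w (j - 1) = Step.down := by
          have hb1 : j - 1 = b := by omega
          rw [hb1]
          cases hwb : w b with
          | right => exact absurd ((hstep b (by omega)).1 hbS hwb) (by rwa [hbj])
          | down => rfl
        rw [sfun_of_down k w j hj0 (by omega) hwb]
        norm_num
    have hST : ∀ j ∈ S \ T, sfun k w j ≤ 0 := by
      intro j hj
      obtain ⟨hjS, hjT⟩ := Finset.mem_sdiff.mp hj
      by_cases hj0 : j = 0
      · rw [hj0, sfun_zero]
      · have hjk : j < k := hmem j hjS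
        have hwj : w (j - 1) = Step.right := by
          cases hwj : w (j - 1) with
          | right => rfl
          | down =>
            exfalso
            have h1 : j - 1 + 1 = j := by omega
            have hj1S : j - 1 ∈ S := by
              have := (hstep (j - 1) (by omega)).2
              rw [h1] at this
              exact this hjS hwj
            exact hjT (Finset.mem_image.mpr ⟨j - 1, hj1S, h1⟩)
        rw [sfun_of_right k w j hj0 hjk hwj]
        norm_num
    have h1 : 0 ≤ ∑ j ∈ T \ S, sfun k w j := Finset.sum_nonneg hTS
    have h2 : ∑ j ∈ S \ T, sfun k w j ≤ 0 := Finset.sum_nonpos hST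
    by_cases h0 : 0 ∈ S
    · have hne : ((Finset.range k) \ S).Nonempty := by
        rw [Finset.sdiff_nonempty]
        intro hsub
        exact hSprop (Finset.Subset.antisymm hSsub hsub)
      obtain ⟨j, hjmem, hjle⟩ : ∃ j ∈ (Finset.range k) \ S,
          ∀ x ∈ (Finset.range k) \ S, j ≤ x :=
        ⟨_, Finset.min'_mem _ hne, fun x hx => Finset.min'_le _ _ hx⟩
      obtain ⟨hjr, hjS⟩ := Finset.mem_sdiff.mp hjmem
      have hjk : j < k := Finset.mem_range.mp hjr
      have hj0 : j ≠ 0 := fun h => hjS (by rw [h]; exact h0)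
      have hj1S : j - 1 ∈ S := by
        by_contra hc
        have := hjle (j - 1)
          (Finset.mem_sdiff.mpr ⟨Finset.mem_range.mpr (by omega), hc⟩)
        omega
      have hjT : j ∈ T := Finset.mem_image.mpr ⟨j - 1, hj1S, by omega⟩
      have hjTS : j ∈ T \ S := Finset.mem_sdiff.mpr ⟨hjT, hjS⟩
      have hwj : w (j - 1) = Step.down := by
        cases hwj : w (j - 1) with
        | right =>
          exfalso
          have h1 : j - 1 + 1 = j := by omega
          have := (hstep (j - 1) (by omega)).1 hj1S hwj
          rw [h1] at this
          exact hjS this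
        | down => rfl
      have hsj : sfun k w j = 1 := sfun_of_down k w j hj0 hjk hwj
      have h3 : (1 : ℤ) ≤ ∑ j ∈ T \ S, sfun k w j := by
        calc (1 : ℤ) = sfun k w j := hsj.symm
        _ ≤ ∑ j ∈ T \ S, sfun k w j := Finset.single_le_sum hTS hjTS
      linarith
    · obtain ⟨a, haS, hale⟩ : ∃ a ∈ S, ∀ x ∈ S, a ≤ x :=
        ⟨_, S.min'_mem hSne, fun x hx => Finset.min'_le _ _ hx⟩
      have hak : a < k := hmem a haS
      have ha0 : a ≠ 0 := fun h => h0 (by rw [← h]; exact haS)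
      have haT : a ∉ T := by
        intro hc
        obtain ⟨b, hbS, hbj⟩ := Finset.mem_image.mp hc
        -- hbj : b + 1 = a
        have := hale b hbS
        omega
      have haST : a ∈ S \ T := Finset.mem_sdiff.mpr ⟨haS, haT⟩
      have hwa : w (a - 1) = Step.right := by
        cases hwa : w (a - 1) with
        | right => rfl
        | down =>
          exfalso
          have h1 : a - 1 + 1 = a := by omega
          have ha1S : a - 1 ∈ S := by
            have := (hstep (a - 1) (by omega)).2
            rw [h1] at this
            exact this haS hwa
          have := hale (a - 1) ha1S
          omega
      have hsa : sfun k w a = -1 := sfun_of_right k w a ha0 hak hwa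
      have h3 : ∑ j ∈ S \ T, sfun k w j ≤ -1 := by
        have herase : sfun k w a + ∑ j ∈ (S \ T).erase a, sfun k w j
            = ∑ j ∈ S \ T, sfun k w j := Finset.add_sum_erase _ _ haST
        have h4 : ∑ j ∈ (S \ T).erase a, sfun k w j ≤ 0 :=
          Finset.sum_nonpos fun j hj => hST j (Finset.erase_subset _ _ hj)
        omega
      linarith
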